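/- Suppose Γ is an E-complete maximally tableau FOLP_CS-consistent set of closed Par-formulas. If ¬(s·t):_X B ∈ Γ, then for every formula A with Par(A) ⊆ X, either ¬s:_X(A→B) ∈ Γ or ¬t:_X A ∈ Γ. -/

import Mathlib

open scoped Classical

/-- Justification terms of FOLP, built from justification variables `jvar i`,
justification constants `jconst i`, and the operations `+`, `·`, `!`, `genₓ`. -/
inductive Tm : Type
  | jvar : ℕ → Tm
  | jconst : ℕ → Tm
  | plus : Tm → Tm → Tm
  | app : Tm → Tm → Tm
  | bang : Tm → Tm
  | gen : ℕ → Tm → Tm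
  deriving DecidableEq

/-- FOLP formulas with extra individual constants from `K` (`K`-formulas).
Individual variables are natural numbers; an argument `Sum.inl x` is an individual
variable, `Sum.inr a` is an element of `K`.  Predicate symbols are indexed by `ℕ`.
Plain FOLP formulas are `Fm Empty`, Par-formulas are `Fm ℕ` (the parameters being a
separate copy of ℕ, namely the `Sum.inr` part), and `D`-formulas are `Fm D`.
`just t X A` is the justification assertion `t :_X A`. -/
inductive Fm (K : Type) : Type
  | pred : ℕ → List (ℕ ⊕ K) → Fm K
  | neg : Fm K → Fm K
  | imp : Fm K → Fm K → Fm K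
  | all : ℕ → Fm K → Fm K
  | ex : ℕ → Fm K → Fm K
  | just : Tm → Finset (ℕ ⊕ K) → Fm K → Fm K

namespace Fm

variable {K K' : Type}

/-- Free individual variables of a `K`-formula.  Recall that
`FVar (t :_X A) = X` (more precisely, the individual-variable part of `X`). -/
noncomputable def fvar : Fm K → Finset ℕ
  | pred _ args => (args.filterMap Sum.getLeft?).toFinset
  | neg A => A.fvar
  | imp A B => A.fvar ∪ B.fvar
  | all x A => A.fvar.erase x
  | ex x A => A.fvar.erase x
  | just _ X _ => (X.toList.filterMap Sum.getLeft?).toFinset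

/-- The elements of `K` occurring in a `K`-formula (for `K = Par` this is `Par(A)`,
for `K = D` this is `D(A)`). -/
noncomputable def kocc : Fm K → Finset K
  | pred _ args => (args.filterMap Sum.getRight?).toFinset
  | neg A => A.kocc
  | imp A B => A.kocc ∪ B.kocc
  | all _ A => A.kocc
  | ex _ A => A.kocc
  | just _ X A => A.kocc ∪ (X.toList.filterMap Sum.getRight?).toFinset

/-- A `K`-formula is closed if it contains no free occurrences of individual variables. -/
def Closed (A : Fm K) : Prop := A.fvar = ∅

/-- Action of a partial substitution (of elements of `K` for individual variables)
on variables/`K`-elements. -/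
def subK (σ : ℕ → Option K) : ℕ ⊕ K → ℕ ⊕ K
  | .inl x => (σ x).elim (.inl x) .inr
  | .inr a => .inr a

/-- Simultaneous substitution of elements of `K` for free individual variables.
In `t :_X A` only the variables belonging to `X` are free, so only those get
substituted (both inside `X` and inside `A`). -/
noncomputable def msubst (σ : ℕ → Option K) : Fm K → Fm K
  | pred Q args => pred Q (args.map (subK σ))
  | neg A => neg (A.msubst σ)
  | imp A B => imp (A.msubst σ) (B.msubst σ)
  | all x A => all x (A.msubst fun y => if y = x then none else σ y)
  | ex x A => ex x (A.msubst fun y => if y = x then none else σ y)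
  | just t X A =>
      just t (X.image (subK σ)) (A.msubst fun y => if Sum.inl y ∈ X then σ y else none)

/-- `A.subst1 x a` is `A(a)`, i.e. `A{x/a}`: the result of replacing all free
occurrences of the individual variable `x` by the element `a : K`. -/
noncomputable def subst1 (x : ℕ) (a : K) (A : Fm K) : Fm K :=
  A.msubst fun y => if y = x then some a else none

/-- Action of a variable-for-variable substitution on arguments. -/
def subVV (x y : ℕ) : ℕ ⊕ K → ℕ ⊕ K
  | .inl z => if z = x then .inl y else .inl z
  | .inr a => .inr a

/-- `A.vsubst x y` is `A{x/y}`: substitution of the individual variable `y` for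
the free occurrences of the individual variable `x`. -/
noncomputable def vsubst (x y : ℕ) : Fm K → Fm K
  | pred Q args => pred Q (args.map (subVV x y))
  | neg A => neg (A.vsubst x y)
  | imp A B => imp (A.vsubst x y) (B.vsubst x y)
  | all z A => if z = x then all z A else all z (A.vsubst x y)
  | ex z A => if z = x then ex z A else ex z (A.vsubst x y)
  | just t X A =>
      if Sum.inl x ∈ X then just t (X.image (subVV x y)) (A.vsubst x y) else just t X A

/-- `FreeFor y x A`: the variable `y` is substitutable for the variable `x` in `A`
(no free occurrence of `x` lies in the scope of a quantifier binding `y`). -/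
def FreeFor (y x : ℕ) : Fm K → Prop
  | pred _ _ => True
  | neg A => FreeFor y x A
  | imp A B => FreeFor y x A ∧ FreeFor y x B
  | all z A => x = z ∨ x ∉ A.fvar ∨ (y ≠ z ∧ FreeFor y x A)
  | ex z A => x = z ∨ x ∉ A.fvar ∨ (y ≠ z ∧ FreeFor y x A)
  | just _ X A => Sum.inl x ∈ X → FreeFor y x A

/-- Action of a renaming on arguments. -/
def subR (σ : ℕ → ℕ) : ℕ ⊕ K → ℕ ⊕ K
  | .inl x => .inl (σ x)
  | .inr a => .inr a

/-- Renaming of all (free and bound) individual variables. -/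
noncomputable def rename (σ : ℕ → ℕ) : Fm K → Fm K
  | pred Q args => pred Q (args.map (subR σ))
  | neg A => neg (A.rename σ)
  | imp A B => imp (A.rename σ) (B.rename σ)
  | all x A => all (σ x) (A.rename σ)
  | ex x A => ex (σ x) (A.rename σ)
  | just t X A => just t (X.image (subR σ)) (A.rename σ)

/-- Mapping the extra individual constants of a `K`-formula along `f : K → K'`. -/
noncomputable def kmap (f : K → K') : Fm K → Fm K'
  | pred Q args => pred Q (args.map (Sum.map id f))
  | neg A => neg (A.kmap f)
  | imp A B => imp (A.kmap f) (B.kmap f)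
  | all x A => all x (A.kmap f)
  | ex x A => ex x (A.kmap f)
  | just t X A => just t (X.image (Sum.map id f)) (A.kmap f)

/-- A size measure used for the well-founded recursion defining truth. -/
noncomputable def size : Fm K → ℕ
  | pred _ _ => 0
  | neg A => A.size + 1
  | imp A B => A.size + B.size + 1
  | all _ A => A.size + 1
  | ex _ A => A.size + 1
  | just _ _ A => A.size + A.fvar.card + 1


theorem fvar_msubst_subset (σ : ℕ → Option K) (A : Fm K) :
    (A.msubst σ).fvar ⊆ A.fvar := by
  induction A generalizing σ with
  | pred Q args =>
      intro y hy
      simp only [msubst, fvar, List.mem_toFinset, List.mem_filterMap, List.mem_map] at hy ⊢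
      obtain ⟨s, ⟨a, ha, rfl⟩, hget⟩ := hy
      cases a with
      | inl z =>
          cases hσ : σ z with
          | none =>
              simp [subK, hσ] at hget
              exact ⟨Sum.inl z, ha, by simp [hget]⟩
          | some b => simp [subK, hσ] at hget
      | inr b => simp [subK] at hget
  | neg A ih => exact ih σ
  | imp A B ihA ihB =>
      simp only [msubst, fvar]
      exact Finset.union_subset_union (ihA σ) (ihB σ)
  | all x A ih =>
      simp only [msubst, fvar]
      exact Finset.erase_subset_erase x (ih _)
  | ex x A ih =>
      simp only [msubst, fvar]
      exact Finset.erase_subset_erase x (ih _)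
  | just t X A ih =>
      intro y hy
      simp only [msubst, fvar, List.mem_toFinset, List.mem_filterMap,
        Finset.mem_toList, Finset.mem_image] at hy ⊢
      obtain ⟨s, ⟨a, ha, rfl⟩, hget⟩ := hy
      cases a with
      | inl z =>
          cases hσ : σ z with
          | none =>
              refine ⟨Sum.inl z, ha, ?_⟩
              simp only [subK, hσ, Option.elim] at hget
              simpa using hget
          | some b => simp [subK, hσ] at hget
      | inr b => simp [subK] at hget

theorem size_msubst_le (σ : ℕ → Option K) (A : Fm K) :
    (A.msubst σ).size ≤ A.size := by
  induction A generalizing σ with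
  | pred Q args => simp [msubst, size]
  | neg A ih => simpa [msubst, size] using ih σ
  | imp A B ihA ihB =>
      simp only [msubst, size]
      have := ihA σ; have := ihB σ; omega
  | all x A ih => simpa [msubst, size] using ih _
  | ex x A ih => simpa [msubst, size] using ih _
  | just t X A ih =>
      simp only [msubst, size]
      have h1 := ih (fun y => if Sum.inl y ∈ X then σ y else none)
      have h2 := Finset.card_le_card
        (fvar_msubst_subset (fun y => if Sum.inl y ∈ X then σ y else none) A)
      omega

theorem size_subst1_le (x : ℕ) (a : K) (A : Fm K) : (A.subst1 x a).size ≤ A.size :=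
  size_msubst_le _ A


/-- `∀A`, the universal closure of `A`. -/
noncomputable def univClosure (A : Fm K) : Fm K :=
  (A.fvar.sort (· ≤ ·)).foldr Fm.all A

theorem size_foldr_all (l : List ℕ) (A : Fm K) :
    (l.foldr Fm.all A).size = A.size + l.length := by
  induction l with
  | nil => simp
  | cons z l ih => simp only [List.foldr, size, ih, List.length_cons]; omega

theorem size_univClosure (A : Fm K) :
    A.univClosure.size = A.size + A.fvar.card := by
  simp [univClosure, size_foldr_all, Finset.length_sort]

end Fm

/-- Embedding plain FOLP formulas into `K`-formulas. -/
noncomputable def toK {K : Type} : Fm Empty → Fm K := Fm.kmap (fun a => a.elim)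

/-- Two FOLP formulas are variable variants if each can be turned into the other
by a renaming of free and bound individual variables. -/
def VariableVariant (A B : Fm Empty) : Prop := ∃ σ : Equiv.Perm ℕ, B = A.rename σ

/-- The axioms of FOLP: a complete list of first order axiom schemes together
with the justification axiom schemes Ctr, Exp, Sum, jK, jT, j4, Gen. -/
inductive FOLPAxiom : Fm Empty → Prop
  | p1 (A B : Fm Empty) : FOLPAxiom (A.imp (B.imp A))
  | p2 (A B C : Fm Empty) : FOLPAxiom ((A.imp (B.imp C)).imp ((A.imp B).imp (A.imp C)))
  | p3 (A B : Fm Empty) : FOLPAxiom (((A.neg).imp (B.neg)).imp (B.imp A))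
  | allElim (x y : ℕ) (A : Fm Empty) : Fm.FreeFor y x A → FOLPAxiom ((Fm.all x A).imp (A.vsubst x y))
  | allImp (x : ℕ) (A B : Fm Empty) : x ∉ A.fvar →
      FOLPAxiom ((Fm.all x (A.imp B)).imp (A.imp (Fm.all x B)))
  | exIntro (x y : ℕ) (A : Fm Empty) : Fm.FreeFor y x A → FOLPAxiom ((A.vsubst x y).imp (Fm.ex x A))
  | exElim (x : ℕ) (A B : Fm Empty) : x ∉ B.fvar →
      FOLPAxiom ((Fm.all x (A.imp B)).imp ((Fm.ex x A).imp B))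
  | ctr (t : Tm) (X : Finset (ℕ ⊕ Empty)) (A : Fm Empty) (y : ℕ) : Sum.inl y ∉ X → y ∉ A.fvar →
      FOLPAxiom ((Fm.just t (insert (Sum.inl y) X) A).imp (Fm.just t X A))
  | exp (t : Tm) (X : Finset (ℕ ⊕ Empty)) (A : Fm Empty) (y : ℕ) : Sum.inl y ∉ X →
      FOLPAxiom ((Fm.just t X A).imp (Fm.just t (insert (Sum.inl y) X) A))
  | sum1 (s t : Tm) (X : Finset (ℕ ⊕ Empty)) (A : Fm Empty) : FOLPAxiom ((Fm.just s X A).imp (Fm.just (Tm.plus s t) X A))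
  | sum2 (s t : Tm) (X : Finset (ℕ ⊕ Empty)) (A : Fm Empty) : FOLPAxiom ((Fm.just s X A).imp (Fm.just (Tm.plus t s) X A))
  | jK (s t : Tm) (X : Finset (ℕ ⊕ Empty)) (A B : Fm Empty) : FOLPAxiom ((Fm.just s X (A.imp B)).imp
      ((Fm.just t X A).imp (Fm.just (Tm.app s t) X B)))
  | jT (t : Tm) (X : Finset (ℕ ⊕ Empty)) (A : Fm Empty) : FOLPAxiom ((Fm.just t X A).imp A)
  | j4 (t : Tm) (X : Finset (ℕ ⊕ Empty)) (A : Fm Empty) : FOLPAxiom ((Fm.just t X A).imp (Fm.just (Tm.bang t) X (Fm.just t X A)))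
  | gen (t : Tm) (X : Finset (ℕ ⊕ Empty)) (A : Fm Empty) (x : ℕ) : Sum.inl x ∉ X →
      FOLPAxiom ((Fm.just t X A).imp (Fm.just (Tm.gen x t) X (Fm.all x A)))

/-- A constant specification is a set of pairs `(c, A)`, read `c : A`
(that is, `c :_∅ A`), where `A` is an axiom instance. -/
def ConstantSpec (CS : Set (ℕ × Fm Empty)) : Prop := ∀ p ∈ CS, FOLPAxiom p.2

/-- `CS` is axiomatically appropriate: every axiom instance has a constant justifying it. -/
def AxiomaticallyAppropriate (CS : Set (ℕ × Fm Empty)) : Prop :=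
  ∀ A, FOLPAxiom A → ∃ c, (c, A) ∈ CS

/-- `CS` is variant closed. -/
def VariantClosed (CS : Set (ℕ × Fm Empty)) : Prop :=
  ∀ c A B, VariableVariant A B → ((c, A) ∈ CS ↔ (c, B) ∈ CS)

/-- Derivability in the axiomatic system `FOLP_CS`:  axioms, axiom necessitation
restricted to `CS`, modus ponens, and universal generalization. -/
inductive Deriv (CS : Set (ℕ × Fm Empty)) : Fm Empty → Prop
  | ax {A : Fm Empty} : FOLPAxiom A → Deriv CS A
  | an {c : ℕ} {A : Fm Empty} : (c, A) ∈ CS → Deriv CS (Fm.just (Tm.jconst c) ∅ A)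
  | mp {A B : Fm Empty} : Deriv CS (A.imp B) → Deriv CS A → Deriv CS B
  | ug {A : Fm Empty} (x : ℕ) : Deriv CS A → Deriv CS (Fm.all x A)

/-- A Mkrtychev model of `FOLP_CS` with domain `D`:  an interpretation `I` of the
predicate symbols and an admissible evidence function `E` satisfying E1–E6. -/
structure MModel (CS : Set (ℕ × Fm Empty)) (D : Type) : Type where
  dom_nonempty : Nonempty D
  I : ℕ → Set (List D)
  E : Tm → Set (Fm D)
  e1 : ∀ c A, (c, A) ∈ CS → toK A ∈ E (Tm.jconst c)
  e2 : ∀ s t (A B : Fm D), Fm.imp A B ∈ E s → A ∈ E t → B ∈ E (Tm.app s t)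
  e3 : ∀ s t, E s ∪ E t ⊆ E (Tm.plus s t)
  e4 : ∀ t (A : Fm D) (X : Finset D), A ∈ E t → A.kocc ⊆ X →
      Fm.just t (X.image Sum.inr) A ∈ E (Tm.bang t)
  e5 : ∀ t (x : ℕ) (A : Fm D), A ∈ E t → Fm.all x A ∈ E (Tm.gen x t)
  e6 : ∀ t (A : Fm D) (x : ℕ) (a : D), A ∈ E t → A.subst1 x a ∈ E t

/-- Truth of a (closed) `D`-formula in a Mkrtychev model. -/
noncomputable def MModel.Sat {CS : Set (ℕ × Fm Empty)} {D : Type} (M : MModel CS D) :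
    Fm D → Prop
  | .pred Q args => ∃ as : List D, args = as.map Sum.inr ∧ as ∈ M.I Q
  | .neg A => ¬ M.Sat A
  | .imp A B => M.Sat A → M.Sat B
  | .all x A => ∀ a : D, M.Sat (A.subst1 x a)
  | .ex x A => ∃ a : D, M.Sat (A.subst1 x a)
  | .just t _ A => A ∈ M.E t ∧ M.Sat A.univClosure
  termination_by F => F.size
  decreasing_by
    all_goals simp only [Fm.size, Fm.size_univClosure]
    all_goals first
      | omega
      | exact Nat.lt_succ_of_le (Fm.size_subst1_le _ _ _)

/-- Truth of an FOLP sentence in a Mkrtychev model. -/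
noncomputable def MModel.SatSentence {CS : Set (ℕ × Fm Empty)} {D : Type}
    (M : MModel CS D) (F : Fm Empty) : Prop := M.Sat (toK F)

/-- A sentence is `FOLP_CS`-valid if it is true in every Mkrtychev model of `FOLP_CS`. -/
def FOLPValid (CS : Set (ℕ × Fm Empty)) (F : Fm Empty) : Prop :=
  ∀ (D : Type) (M : MModel CS D), M.SatSentence F

/-- Satisfiability of a closed Par-formula `A(u₁,…,uₙ)` in a model:
`M ⊩ A(a₁,…,aₙ)` for some `a₁,…,aₙ ∈ D`. -/
noncomputable def MModel.SatPar {CS : Set (ℕ × Fm Empty)} {D : Type}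
    (M : MModel CS D) (F : Fm ℕ) : Prop :=
  ∃ g : ℕ → D, M.Sat (F.kmap g)

/-- `X ⊆ Par`: the set `X` consists of parameters only. -/
def XPar (X : Finset (ℕ ⊕ ℕ)) : Prop := ∀ s ∈ X, ∃ u : ℕ, s = Sum.inr u

/-- One application of an FOLP tableau rule to a branch (represented by the set `S`
of closed Par-formulas occurring on it), producing the list of extended branches
(one branch for a non-branching rule, two for a branching rule). -/
inductive TabRule : Set (Fm ℕ) → List (Set (Fm ℕ)) → Prop
  | fneg {S A} : Fm.neg (Fm.neg A) ∈ S → TabRule S [insert A S]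
  | timp {S A B} : Fm.imp A B ∈ S → TabRule S [insert (Fm.neg A) S, insert B S]
  | fimp {S A B} : Fm.neg (Fm.imp A B) ∈ S → TabRule S [insert A (insert (Fm.neg B) S)]
  | tall {S x A} (u : ℕ) : Fm.all x A ∈ S → TabRule S [insert (A.subst1 x u) S]
  | fex {S x A} (u : ℕ) : Fm.neg (Fm.ex x A) ∈ S →
      TabRule S [insert (Fm.neg (A.subst1 x u)) S]
  | tex {S x A} (u : ℕ) : Fm.ex x A ∈ S → (∀ F ∈ S, u ∉ F.kocc) →
      TabRule S [insert (A.subst1 x u) S]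
  | fall {S x A} (u : ℕ) : Fm.neg (Fm.all x A) ∈ S → (∀ F ∈ S, u ∉ F.kocc) →
      TabRule S [insert (Fm.neg (A.subst1 x u)) S]
  | tcolon {S t X A} : Fm.just t X A ∈ S → XPar X → TabRule S [insert A.univClosure S]
  | fplus {S t s X A} : Fm.neg (Fm.just (Tm.plus t s) X A) ∈ S → XPar X →
      TabRule S [insert (Fm.neg (Fm.just t X A)) (insert (Fm.neg (Fm.just s X A)) S)]
  | fapp {S s t X B} (A : Fm ℕ) : Fm.neg (Fm.just (Tm.app s t) X B) ∈ S → XPar X →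
      (∀ u ∈ A.kocc, Sum.inr u ∈ X) →
      TabRule S [insert (Fm.neg (Fm.just s X (A.imp B))) S,
                 insert (Fm.neg (Fm.just t X A)) S]
  | fbang {S t X A} : Fm.neg (Fm.just (Tm.bang t) X (Fm.just t X A)) ∈ S → XPar X →
      TabRule S [insert (Fm.neg (Fm.just t X A)) S]
  | ctr {S t X A} (u : ℕ) : Fm.neg (Fm.just t X A) ∈ S → XPar X → Sum.inr u ∉ X →
      TabRule S [insert (Fm.neg (Fm.just t (insert (Sum.inr u) X) A)) S]
  | exp {S t X A} (u : ℕ) : Fm.neg (Fm.just t (insert (Sum.inr u) X) A) ∈ S →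
      XPar X → Sum.inr u ∉ X → u ∉ A.kocc →
      TabRule S [insert (Fm.neg (Fm.just t X A)) S]
  | ins {S t X A} (x u : ℕ) : Fm.neg (Fm.just t X (A.subst1 x u)) ∈ S → XPar X →
      TabRule S [insert (Fm.neg (Fm.just t X A)) S]
  | genx {S t X A x} : Fm.neg (Fm.just (Tm.gen x t) X (Fm.all x A)) ∈ S → XPar X →
      TabRule S [insert (Fm.neg (Fm.just t X A)) S]

/-- `ClosedTableau CS S`: there is a closed `FOLP_CS`-tableau beginning with the
formulas of `S`.  A branch closes if it contains both `A` and `¬A`, or contains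
`¬c:A` with `c:A ∈ CS`. -/
inductive ClosedTableau (CS : Set (ℕ × Fm Empty)) : Set (Fm ℕ) → Prop
  | close {S A} : A ∈ S → Fm.neg A ∈ S → ClosedTableau CS S
  | closeCS {S c A} : (c, A) ∈ CS →
      Fm.neg (Fm.just (Tm.jconst c) ∅ (toK A)) ∈ S → ClosedTableau CS S
  | step {S l} : TabRule S l → (∀ S' ∈ l, ClosedTableau CS S') → ClosedTableau CS S

/-- An `FOLP_CS`-tableau proof of the sentence `F`: a closed tableau beginning
with `¬F`. -/
def TabProof (CS : Set (ℕ × Fm Empty)) (F : Fm Empty) : Prop :=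
  ClosedTableau CS {Fm.neg (toK F)}

/-- A set of closed Par-formulas is tableau `FOLP_CS`-consistent if no finite
subset of it has a closed `FOLP_CS`-tableau. -/
def TabConsistent (CS : Set (ℕ × Fm Empty)) (Γ : Set (Fm ℕ)) : Prop :=
  ∀ S : Set (Fm ℕ), S ⊆ Γ → S.Finite → ¬ ClosedTableau CS S

/-- `Γ` is maximal: it has no proper tableau consistent extension by closed Par-formulas. -/
def MaximalCons (CS : Set (ℕ × Fm Empty)) (Γ : Set (Fm ℕ)) : Prop :=
  TabConsistent CS Γ ∧
    ∀ Δ : Set (Fm ℕ), Γ ⊆ Δ → (∀ F ∈ Δ, F.Closed) → TabConsistent CS Δ → Δ = Γ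

/-- `Γ` is E-complete (with parameters as witnesses). -/
def EComplete (Γ : Set (Fm ℕ)) : Prop :=
  (∀ (x : ℕ) (A : Fm ℕ), Fm.ex x A ∈ Γ → ∃ u : ℕ, A.subst1 x u ∈ Γ) ∧
  (∀ (x : ℕ) (A : Fm ℕ), Fm.neg (Fm.all x A) ∈ Γ → ∃ u : ℕ, Fm.neg (A.subst1 x u) ∈ Γ)

/-- The interpretation of the canonical model determined by `Γ`:
`I(Q) = { (u₁,…,uₙ) | Q(u₁,…,uₙ) ∈ Γ }`. -/
def canI (Γ : Set (Fm ℕ)) (Q : ℕ) : Set (List ℕ) :=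
  {us | Fm.pred Q (us.map Sum.inr) ∈ Γ}

/-- The evidence function of the canonical model determined by `Γ`:
`E(t) = { A | ¬ t:_{Par(A)} A ∉ Γ }`. -/
def canE (Γ : Set (Fm ℕ)) (t : Tm) : Set (Fm ℕ) :=
  {A | Fm.neg (Fm.just t (A.kocc.image Sum.inr) A) ∉ Γ}
section AuxFapp

namespace Fm
variable {K K' : Type}

theorem mem_right_toFinset {X : Finset (ℕ ⊕ K)} {a : K} :
    a ∈ (X.toList.filterMap Sum.getRight?).toFinset ↔ Sum.inr a ∈ X := by
  simp only [List.mem_toFinset, List.mem_filterMap, Finset.mem_toList]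
  constructor
  · rintro ⟨s, hs, hget⟩
    cases s with
    | inl x => simp [Sum.getRight?] at hget
    | inr b =>
        simp only [Sum.getRight?, Option.some.injEq] at hget
        subst hget; exact hs
  · intro h; exact ⟨Sum.inr a, h, rfl⟩

theorem mem_left_toFinset {X : Finset (ℕ ⊕ K)} {x : ℕ} :
    x ∈ (X.toList.filterMap Sum.getLeft?).toFinset ↔ Sum.inl x ∈ X := by
  simp only [List.mem_toFinset, List.mem_filterMap, Finset.mem_toList]
  constructor
  · rintro ⟨s, hs, hget⟩
    cases s with
    | inl y =>
        simp only [Sum.getLeft?, Option.some.injEq] at hget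
        subst hget; exact hs
    | inr b => simp [Sum.getLeft?] at hget
  · intro h; exact ⟨Sum.inl x, h, rfl⟩

theorem mem_right_list {args : List (ℕ ⊕ K)} {a : K} :
    a ∈ (args.filterMap Sum.getRight?).toFinset ↔ Sum.inr a ∈ args := by
  simp only [List.mem_toFinset, List.mem_filterMap]
  constructor
  · rintro ⟨s, hs, hget⟩
    cases s with
    | inl x => simp [Sum.getRight?] at hget
    | inr b =>
        simp only [Sum.getRight?, Option.some.injEq] at hget
        subst hget; exact hs
  · intro h; exact ⟨Sum.inr a, h, rfl⟩

theorem filterMap_right_map (f : K → K') (l : List (ℕ ⊕ K)) :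
    (l.map (Sum.map id f)).filterMap Sum.getRight? =
      (l.filterMap Sum.getRight?).map f := by
  rw [List.filterMap_map, List.map_filterMap]
  congr 1
  funext s
  cases s <;> rfl

theorem filterMap_left_map (f : K → K') (l : List (ℕ ⊕ K)) :
    (l.map (Sum.map id f)).filterMap Sum.getLeft? = l.filterMap Sum.getLeft? := by
  rw [List.filterMap_map]
  congr 1
  funext s
  cases s <;> rfl

theorem list_toFinset_map {α β : Type*} [DecidableEq β] (f : α → β) (l : List α) :
    (l.map f).toFinset = l.toFinset.image f := by
  ext b; simp

theorem right_part_image (f : K → K') (X : Finset (ℕ ⊕ K)) :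
    (((X.image (Sum.map id f)).toList.filterMap Sum.getRight?).toFinset : Finset K') =
      ((X.toList.filterMap Sum.getRight?).toFinset).image f := by
  classical
  ext b
  simp only [mem_right_toFinset, Finset.mem_image]
  constructor
  · rintro ⟨s, hs, hmap⟩
    cases s with
    | inl x => simp only [Sum.map_inl] at hmap; simp at hmap
    | inr c =>
        refine ⟨c, hs, ?_⟩
        simpa using hmap
  · rintro ⟨c, hc, rfl⟩
    exact ⟨Sum.inr c, hc, rfl⟩

theorem left_part_image (f : K → K') (X : Finset (ℕ ⊕ K)) :
    (((X.image (Sum.map id f)).toList.filterMap Sum.getLeft?).toFinset : Finset ℕ) =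
      (X.toList.filterMap Sum.getLeft?).toFinset := by
  ext y
  simp only [mem_left_toFinset]
  constructor
  · intro hy
    rw [Finset.mem_image] at hy
    obtain ⟨s, hs, hmap⟩ := hy
    cases s with
    | inl x =>
        simp only [Sum.map_inl, id_eq, Sum.inl.injEq] at hmap
        subst hmap; exact hs
    | inr c => simp only [Sum.map_inr] at hmap; simp at hmap
  · intro hy
    rw [Finset.mem_image]
    exact ⟨Sum.inl y, hy, rfl⟩

theorem inl_mem_image_sumMap {f : K → K'} {X : Finset (ℕ ⊕ K)} {y : ℕ} :
    Sum.inl y ∈ X.image (Sum.map id f) ↔ Sum.inl y ∈ X := by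
  constructor
  · intro hy
    rw [Finset.mem_image] at hy
    obtain ⟨s, hs, hmap⟩ := hy
    cases s with
    | inl x =>
        simp only [Sum.map_inl, id_eq, Sum.inl.injEq] at hmap
        subst hmap; exact hs
    | inr c => simp only [Sum.map_inr] at hmap; simp at hmap
  · intro hy
    rw [Finset.mem_image]
    exact ⟨Sum.inl y, hy, rfl⟩

theorem kocc_kmap (f : K → K') : ∀ A : Fm K, (A.kmap f).kocc = A.kocc.image f
  | pred Q args => by
      simp only [kmap, kocc]
      rw [filterMap_right_map, list_toFinset_map]
  | neg A => by simp only [kmap, kocc]; exact kocc_kmap f A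
  | imp A B => by
      simp only [kmap, kocc, Finset.image_union, kocc_kmap f A, kocc_kmap f B]
  | all x A => by simp only [kmap, kocc]; exact kocc_kmap f A
  | ex x A => by simp only [kmap, kocc]; exact kocc_kmap f A
  | just t X A => by
      simp only [kmap, kocc, Finset.image_union, kocc_kmap f A, right_part_image]

theorem fvar_kmap (f : K → K') : ∀ A : Fm K, (A.kmap f).fvar = A.fvar
  | pred Q args => by
      simp only [kmap, fvar]
      rw [filterMap_left_map]
  | neg A => by simp only [kmap, fvar]; exact fvar_kmap f A
  | imp A B => by simp only [kmap, fvar, fvar_kmap f A, fvar_kmap f B]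
  | all x A => by simp only [kmap, fvar, fvar_kmap f A]
  | ex x A => by simp only [kmap, fvar, fvar_kmap f A]
  | just t X A => by simp only [kmap, fvar, left_part_image]

theorem kmap_congr {f g : K → K'} : ∀ {A : Fm K}, (∀ a ∈ A.kocc, f a = g a) → A.kmap f = A.kmap g := by
  intro A
  induction A with
  | pred Q args =>
      intro h
      simp only [kmap, pred.injEq, true_and]
      apply List.map_congr_left
      intro s hs
      cases s with
      | inl x => rfl
      | inr c =>
          have : f c = g c := h c (mem_right_list.mpr hs)
          simp [Sum.map, this]
  | neg A ih => intro h; simp only [kmap, neg.injEq]; exact ih h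
  | imp A B ihA ihB =>
      intro h
      simp only [kocc] at h
      simp only [kmap, imp.injEq]
      exact ⟨ihA fun a ha => h a (Finset.mem_union_left _ ha),
             ihB fun a ha => h a (Finset.mem_union_right _ ha)⟩
  | all x A ih => intro h; simp only [kmap, all.injEq, true_and]; exact ih h
  | ex x A ih => intro h; simp only [kmap, ex.injEq, true_and]; exact ih h
  | just t X A ih =>
      intro h
      simp only [kocc] at h
      simp only [kmap, just.injEq, true_and]
      constructor
      · apply Finset.image_congr
        intro s hs
        cases s with
        | inl x => rfl
        | inr c =>
            have : f c = g c := h c (Finset.mem_union_right _ (mem_right_toFinset.mpr hs))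
            simp [Sum.map, this]
      · exact ih fun a ha => h a (Finset.mem_union_left _ ha)

end Fm

end AuxFapp
section AuxFapp2

namespace Fm
variable {K K' K'' : Type}

theorem subK_map (f : K → K') (σ : ℕ → Option K) (s : ℕ ⊕ K) :
    Sum.map id f (subK σ s) = subK (fun y => (σ y).map f) (Sum.map id f s) := by
  cases s with
  | inl x =>
      simp only [Sum.map_inl, id_eq, subK]
      cases σ x <;> rfl
  | inr a => rfl

theorem kmap_msubst (f : K → K') : ∀ (A : Fm K) (σ : ℕ → Option K),
    (A.msubst σ).kmap f = (A.kmap f).msubst (fun y => (σ y).map f)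
  | pred Q args, σ => by
      simp only [msubst, kmap, List.map_map]
      rw [show (Sum.map id f ∘ subK σ) = ((subK fun y => (σ y).map f) ∘ Sum.map id f) from
        funext fun s => subK_map f σ s]
  | neg A, σ => by simp only [msubst, kmap, kmap_msubst f A]
  | imp A B, σ => by simp only [msubst, kmap, kmap_msubst f A, kmap_msubst f B]
  | all x A, σ => by
      simp only [msubst, kmap, kmap_msubst f A]
      rw [show (fun y => Option.map f (if y = x then none else σ y)) =
        (fun y => if y = x then none else Option.map f (σ y)) from
        funext fun y => by split <;> rfl]
  | ex x A, σ => by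
      simp only [msubst, kmap, kmap_msubst f A]
      rw [show (fun y => Option.map f (if y = x then none else σ y)) =
        (fun y => if y = x then none else Option.map f (σ y)) from
        funext fun y => by split <;> rfl]
  | just t X A, σ => by
      simp only [msubst, kmap, kmap_msubst f A, Finset.image_image]
      rw [show (Sum.map id f ∘ subK σ) = ((subK fun y => (σ y).map f) ∘ Sum.map id f) from
        funext fun s => subK_map f σ s]
      rw [show (fun y => Option.map f (if Sum.inl y ∈ X then σ y else none)) =
        (fun y => if Sum.inl y ∈ Finset.image (Sum.map id f) X then Option.map f (σ y) else none) from
        funext fun y => by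
          by_cases hy : Sum.inl y ∈ X
          · simp [hy, inl_mem_image_sumMap.mpr hy]
          · simp [hy, fun h => hy (inl_mem_image_sumMap.mp h)]]

theorem kmap_subst1 (f : K → K') (x : ℕ) (a : K) (A : Fm K) :
    (A.subst1 x a).kmap f = (A.kmap f).subst1 x (f a) := by
  unfold subst1
  rw [kmap_msubst]
  rw [show (fun y => Option.map f (if y = x then some a else none)) =
    (fun y => if y = x then some (f a) else none) from
    funext fun y => by split <;> rfl]

theorem kmap_kmap (f : K → K') (g : K' → K'') : ∀ A : Fm K,
    (A.kmap f).kmap g = A.kmap (g ∘ f)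
  | pred Q args => by
      simp only [kmap, List.map_map]
      rw [show (Sum.map id g ∘ Sum.map id f) = (Sum.map id (g ∘ f) : ℕ ⊕ K → ℕ ⊕ K'') from
        funext fun s => by cases s <;> rfl]
  | neg A => by simp only [kmap, kmap_kmap f g A]
  | imp A B => by simp only [kmap, kmap_kmap f g A, kmap_kmap f g B]
  | all x A => by simp only [kmap, kmap_kmap f g A]
  | ex x A => by simp only [kmap, kmap_kmap f g A]
  | just t X A => by
      simp only [kmap, kmap_kmap f g A, Finset.image_image]
      rw [show (Sum.map id g ∘ Sum.map id f) = (Sum.map id (g ∘ f) : ℕ ⊕ K → ℕ ⊕ K'') from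
        funext fun s => by cases s <;> rfl]

theorem kmap_id : ∀ A : Fm K, A.kmap id = A
  | pred Q args => by
      simp only [kmap]
      rw [show (Sum.map id (id : K → K)) = id from funext (by rintro (x | a) <;> rfl)]
      rw [List.map_id]
  | neg A => by simp only [kmap, kmap_id A]
  | imp A B => by simp only [kmap, kmap_id A, kmap_id B]
  | all x A => by simp only [kmap, kmap_id A]
  | ex x A => by simp only [kmap, kmap_id A]
  | just t X A => by
      simp only [kmap, kmap_id A]
      rw [show (Sum.map id (id : K → K)) = id from funext (by rintro (x | a) <;> rfl)]
      rw [Finset.image_id]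

theorem kmap_foldr_all (f : K → K') (A : Fm K) : ∀ l : List ℕ,
    (l.foldr Fm.all A).kmap f = l.foldr Fm.all (A.kmap f)
  | [] => rfl
  | z :: l => by simp only [List.foldr, kmap, kmap_foldr_all f A l]

theorem kmap_univClosure (f : K → K') (A : Fm K) :
    A.univClosure.kmap f = (A.kmap f).univClosure := by
  unfold univClosure
  rw [kmap_foldr_all, fvar_kmap]

end Fm

theorem kmap_toK (f : ℕ → ℕ) (A : Fm Empty) : (toK A : Fm ℕ).kmap f = toK A := by
  unfold toK
  rw [Fm.kmap_kmap]
  congr 1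
  funext a
  exact a.elim

theorem XPar.image {X : Finset (ℕ ⊕ ℕ)} (h : XPar X) (f : ℕ → ℕ) {inst : DecidableEq (ℕ ⊕ ℕ)} :
    XPar (@Finset.image _ _ inst (Sum.map id f) X) := by
  rintro s hs
  rw [Finset.mem_image] at hs
  obtain ⟨a, ha, rfl⟩ := hs
  obtain ⟨u, rfl⟩ := h a ha
  exact ⟨f u, rfl⟩

theorem exists_fresh {S : Set (Fm ℕ)} (hS : S.Finite) : ∃ u : ℕ, ∀ F ∈ S, u ∉ F.kocc := by
  have hfin : (⋃ F ∈ S, (F.kocc : Set ℕ)).Finite :=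
    hS.biUnion (fun F _ => (F.kocc).finite_toSet)
  obtain ⟨u, hu⟩ := hfin.infinite_compl.nonempty
  exact ⟨u, fun F hF hmem => hu (Set.mem_biUnion hF hmem)⟩

theorem image_insert_subset {f : Fm ℕ → Fm ℕ} {G : Fm ℕ} {S S' : Set (Fm ℕ)}
    (hsub : f '' S ⊆ S') : f '' (insert G S) ⊆ insert (f G) S' := by
  rw [Set.image_insert_eq]
  exact Set.insert_subset_insert hsub

end AuxFapp2
section AuxFapp3

theorem inr_notmem_image {f : ℕ → ℕ} (hf : Function.Injective f) {X : Finset (ℕ ⊕ ℕ)} {u : ℕ}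
    {inst : DecidableEq (ℕ ⊕ ℕ)}
    (hu : Sum.inr u ∉ X) : Sum.inr (f u) ∉ @Finset.image _ _ inst (Sum.map id f) X := by
  intro hmem
  rw [Finset.mem_image] at hmem
  obtain ⟨s, hs, hmap⟩ := hmem
  cases s with
  | inl x => simp only [Sum.map_inl] at hmap; simp at hmap
  | inr v =>
      simp only [Sum.map_inr, Sum.inr.injEq] at hmap
      exact hu (by rwa [hf hmap] at hs)

theorem image_insert_inr {α β : Type*} (f : α → β) (a : α) (X : Finset α)
    {i1 : DecidableEq β} {i2 : DecidableEq α} [i3 : DecidableEq β] :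
    @Finset.image _ _ i1 f (@insert _ _ (@Finset.instInsert _ i2) a X)
      = @insert _ _ (@Finset.instInsert _ i3) (f a) (@Finset.image _ _ i1 f X) := by
  have h13 : i1 = i3 := Subsingleton.elim _ _
  subst h13
  exact Finset.image_insert f a X

theorem kocc_cond {f : ℕ → ℕ} {A : Fm ℕ} {X : Finset (ℕ ⊕ ℕ)} {inst : DecidableEq (ℕ ⊕ ℕ)}
    (hA : ∀ u ∈ A.kocc, Sum.inr u ∈ X) :
    ∀ v ∈ (A.kmap f).kocc, Sum.inr v ∈ @Finset.image _ _ inst (Sum.map id f) X := by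
  intro v hv
  rw [Fm.kocc_kmap] at hv
  simp only [Finset.mem_image] at hv
  obtain ⟨a, ha, rfl⟩ := hv
  simp only [Finset.mem_image]
  exact ⟨Sum.inr a, hA a ha, rfl⟩

theorem closedTableau_perm_mono {CS : Set (ℕ × Fm Empty)} {S : Set (Fm ℕ)}
    (h : ClosedTableau CS S) :
    ∀ (f : Equiv.Perm ℕ) (S' : Set (Fm ℕ)), S'.Finite →
      Fm.kmap ⇑f '' S ⊆ S' → ClosedTableau CS S' := by
  induction h with
  | @close _ A hA hnA =>
      intro f S' _ hsub
      have h1 := hsub (Set.mem_image_of_mem _ hA)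
      have h2 := hsub (Set.mem_image_of_mem _ hnA)
      simp only [Fm.kmap] at h2
      exact ClosedTableau.close h1 h2
  | @closeCS _ c A hCA hmem =>
      intro f S' _ hsub
      have h1 := hsub (Set.mem_image_of_mem _ hmem)
      simp only [Fm.kmap, Finset.image_empty, kmap_toK] at h1
      exact ClosedTableau.closeCS hCA h1
  | @step _ l hrule htabs ih =>
      intro f S' hfin hsub
      cases hrule with
      | @fneg A hmem =>
          have h1 : Fm.neg (Fm.neg (A.kmap ⇑f)) ∈ S' := by
            have := hsub (Set.mem_image_of_mem _ hmem)
            simpa only [Fm.kmap] using this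
          refine ClosedTableau.step (TabRule.fneg h1) ?_
          rintro S'' hS''
          simp only [List.mem_singleton] at hS''
          subst hS''
          refine ih _ (List.mem_singleton_self _) f _ (hfin.insert _) ?_
          rw [Set.image_insert_eq]
          exact Set.insert_subset_insert hsub
      | @timp A B hmem =>
          have h1 : Fm.imp (A.kmap ⇑f) (B.kmap ⇑f) ∈ S' := by
            have := hsub (Set.mem_image_of_mem _ hmem)
            simpa only [Fm.kmap] using this
          refine ClosedTableau.step (TabRule.timp h1) ?_
          rintro S'' hS''
          simp only [List.mem_cons, List.not_mem_nil, or_false] at hS''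
          rcases hS'' with rfl | rfl
          · refine ih _ List.mem_cons_self f _ (hfin.insert _) ?_
            rw [Set.image_insert_eq]
            simp only [Fm.kmap]
            exact Set.insert_subset_insert hsub
          · refine ih _ (List.mem_cons_of_mem _ (List.mem_singleton_self _)) f _ (hfin.insert _) ?_
            rw [Set.image_insert_eq]
            exact Set.insert_subset_insert hsub
      | @fimp A B hmem =>
          have h1 : Fm.neg (Fm.imp (A.kmap ⇑f) (B.kmap ⇑f)) ∈ S' := by
            have := hsub (Set.mem_image_of_mem _ hmem)
            simpa only [Fm.kmap] using this
          refine ClosedTableau.step (TabRule.fimp h1) ?_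
          rintro S'' hS''
          simp only [List.mem_singleton] at hS''
          subst hS''
          refine ih _ (List.mem_singleton_self _) f _ ((hfin.insert _).insert _) ?_
          rw [Set.image_insert_eq, Set.image_insert_eq]
          simp only [Fm.kmap]
          exact Set.insert_subset_insert (Set.insert_subset_insert hsub)
      | @tall x A u hmem =>
          have h1 : Fm.all x (A.kmap ⇑f) ∈ S' := by
            have := hsub (Set.mem_image_of_mem _ hmem)
            simpa only [Fm.kmap] using this
          refine ClosedTableau.step (TabRule.tall (f u) h1) ?_
          rintro S'' hS''
          simp only [List.mem_singleton] at hS''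
          subst hS''
          refine ih _ (List.mem_singleton_self _) f _ (hfin.insert _) ?_
          rw [Set.image_insert_eq, Fm.kmap_subst1]
          exact Set.insert_subset_insert hsub
      | @fex x A u hmem =>
          have h1 : Fm.neg (Fm.ex x (A.kmap ⇑f)) ∈ S' := by
            have := hsub (Set.mem_image_of_mem _ hmem)
            simpa only [Fm.kmap] using this
          refine ClosedTableau.step (TabRule.fex (f u) h1) ?_
          rintro S'' hS''
          simp only [List.mem_singleton] at hS''
          subst hS''
          refine ih _ (List.mem_singleton_self _) f _ (hfin.insert _) ?_
          rw [Set.image_insert_eq]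
          simp only [Fm.kmap]
          rw [Fm.kmap_subst1]
          exact Set.insert_subset_insert hsub
      | @tex x A u hmem hfresh =>
          obtain ⟨u', hu'⟩ := exists_fresh hfin
          have h1 : Fm.ex x (A.kmap ⇑f) ∈ S' := by
            have := hsub (Set.mem_image_of_mem _ hmem)
            simpa only [Fm.kmap] using this
          set g : Equiv.Perm ℕ := f.trans (Equiv.swap (f u) u') with hg
          have hgu : g u = u' := by
            simp only [hg, Equiv.trans_apply, Equiv.swap_apply_left]
          have hga : ∀ F : Fm ℕ, u ∉ F.kocc → Fm.kmap ⇑f F ∈ S' → ∀ a ∈ F.kocc, g a = f a := by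
            intro F hFu hFS a ha
            have h2 : f a ≠ f u := fun hEq => hFu (by rwa [f.injective hEq] at ha)
            have h3 : f a ≠ u' := by
              intro hEq
              apply hu' _ hFS
              rw [Fm.kocc_kmap]
              simp only [Finset.mem_image]
              exact ⟨a, ha, hEq⟩
            simp only [hg, Equiv.trans_apply]
            exact Equiv.swap_apply_of_ne_of_ne h2 h3
          have hgA : A.kmap ⇑g = A.kmap ⇑f := by
            apply Fm.kmap_congr
            intro a ha
            exact hga (Fm.ex x A) (hfresh _ hmem) (hsub (Set.mem_image_of_mem _ hmem)) a
              (by simpa only [Fm.kocc] using ha)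
          refine ClosedTableau.step (TabRule.tex u' h1 hu') ?_
          rintro S'' hS''
          simp only [List.mem_singleton] at hS''
          subst hS''
          refine ih _ (List.mem_singleton_self _) g _ (hfin.insert _) ?_
          rw [Set.image_insert_eq, Fm.kmap_subst1, hgu, hgA]
          apply Set.insert_subset_insert
          rintro _ ⟨F, hF, rfl⟩
          rw [Fm.kmap_congr (hga F (hfresh F hF) (hsub (Set.mem_image_of_mem _ hF)))]
          exact hsub (Set.mem_image_of_mem _ hF)
      | @fall x A u hmem hfresh =>
          obtain ⟨u', hu'⟩ := exists_fresh hfin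
          have h1 : Fm.neg (Fm.all x (A.kmap ⇑f)) ∈ S' := by
            have := hsub (Set.mem_image_of_mem _ hmem)
            simpa only [Fm.kmap] using this
          set g : Equiv.Perm ℕ := f.trans (Equiv.swap (f u) u') with hg
          have hgu : g u = u' := by
            simp only [hg, Equiv.trans_apply, Equiv.swap_apply_left]
          have hga : ∀ F : Fm ℕ, u ∉ F.kocc → Fm.kmap ⇑f F ∈ S' → ∀ a ∈ F.kocc, g a = f a := by
            intro F hFu hFS a ha
            have h2 : f a ≠ f u := fun hEq => hFu (by rwa [f.injective hEq] at ha)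
            have h3 : f a ≠ u' := by
              intro hEq
              apply hu' _ hFS
              rw [Fm.kocc_kmap]
              simp only [Finset.mem_image]
              exact ⟨a, ha, hEq⟩
            simp only [hg, Equiv.trans_apply]
            exact Equiv.swap_apply_of_ne_of_ne h2 h3
          have hgA : A.kmap ⇑g = A.kmap ⇑f := by
            apply Fm.kmap_congr
            intro a ha
            exact hga (Fm.neg (Fm.all x A)) (hfresh _ hmem) (hsub (Set.mem_image_of_mem _ hmem)) a
              (by simpa only [Fm.kocc] using ha)
          refine ClosedTableau.step (TabRule.fall u' h1 hu') ?_
          rintro S'' hS''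
          simp only [List.mem_singleton] at hS''
          subst hS''
          refine ih _ (List.mem_singleton_self _) g _ (hfin.insert _) ?_
          rw [Set.image_insert_eq]
          simp only [Fm.kmap]
          rw [Fm.kmap_subst1, hgu, hgA]
          apply Set.insert_subset_insert
          rintro _ ⟨F, hF, rfl⟩
          rw [Fm.kmap_congr (hga F (hfresh F hF) (hsub (Set.mem_image_of_mem _ hF)))]
          exact hsub (Set.mem_image_of_mem _ hF)
      | @tcolon t X A hmem hX =>
          have h1 := hsub (Set.mem_image_of_mem _ hmem)
          simp only [Fm.kmap] at h1
          refine ClosedTableau.step (TabRule.tcolon h1 (hX.image ⇑f)) ?_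
          rintro S'' hS''
          simp only [List.mem_singleton] at hS''
          subst hS''
          refine ih _ (List.mem_singleton_self _) f _ (hfin.insert _) ?_
          rw [Set.image_insert_eq, Fm.kmap_univClosure]
          exact Set.insert_subset_insert hsub
      | @fplus t s X A hmem hX =>
          have h1 := hsub (Set.mem_image_of_mem _ hmem)
          simp only [Fm.kmap] at h1
          refine ClosedTableau.step (TabRule.fplus h1 (hX.image ⇑f)) ?_
          rintro S'' hS''
          simp only [List.mem_singleton] at hS''
          subst hS''
          refine ih _ (List.mem_singleton_self _) f _ ((hfin.insert _).insert _) ?_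
          rw [Set.image_insert_eq, Set.image_insert_eq]
          simp only [Fm.kmap]
          exact Set.insert_subset_insert (Set.insert_subset_insert hsub)
      | @fapp s t X B A hmem hX hA =>
          have h1 := hsub (Set.mem_image_of_mem _ hmem)
          simp only [Fm.kmap] at h1
          refine ClosedTableau.step (TabRule.fapp (A.kmap ⇑f) h1 (hX.image ⇑f) (kocc_cond hA)) ?_
          rintro S'' hS''
          simp only [List.mem_cons, List.not_mem_nil, or_false] at hS''
          rcases hS'' with rfl | rfl
          · refine ih _ List.mem_cons_self f _ (hfin.insert _) ?_
            rw [Set.image_insert_eq]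
            simp only [Fm.kmap]
            exact Set.insert_subset_insert hsub
          · refine ih _ (List.mem_cons_of_mem _ (List.mem_singleton_self _)) f _ (hfin.insert _) ?_
            rw [Set.image_insert_eq]
            simp only [Fm.kmap]
            exact Set.insert_subset_insert hsub
      | @fbang t X A hmem hX =>
          have h1 := hsub (Set.mem_image_of_mem _ hmem)
          simp only [Fm.kmap] at h1
          refine ClosedTableau.step (TabRule.fbang h1 (hX.image ⇑f)) ?_
          rintro S'' hS''
          simp only [List.mem_singleton] at hS''
          subst hS''
          refine ih _ (List.mem_singleton_self _) f _ (hfin.insert _) ?_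
          rw [Set.image_insert_eq]
          simp only [Fm.kmap]
          exact Set.insert_subset_insert hsub
      | @ctr t X A u hmem hX hu =>
          have h1 := hsub (Set.mem_image_of_mem _ hmem)
          simp only [Fm.kmap] at h1
          refine ClosedTableau.step
            (TabRule.ctr (f u) h1 (hX.image ⇑f) (inr_notmem_image f.injective hu)) ?_
          rintro S'' hS''
          simp only [List.mem_singleton] at hS''
          subst hS''
          refine ih _ (List.mem_singleton_self _) f _ (hfin.insert _) ?_
          rw [Set.image_insert_eq]
          simp only [Fm.kmap]
          rw [image_insert_inr]
          exact Set.insert_subset_insert hsub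
      | @exp t X A u hmem hX hu hu2 =>
          have h1 := hsub (Set.mem_image_of_mem _ hmem)
          simp only [Fm.kmap] at h1
          rw [image_insert_inr] at h1
          have hu2' : f u ∉ (A.kmap ⇑f).kocc := by
            rw [Fm.kocc_kmap]
            intro hmem'
            simp only [Finset.mem_image] at hmem'
            obtain ⟨a, ha, hEq⟩ := hmem'
            exact hu2 (by rwa [f.injective hEq] at ha)
          refine ClosedTableau.step
            (TabRule.exp (f u) h1 (hX.image ⇑f) (inr_notmem_image f.injective hu) hu2') ?_
          rintro S'' hS''
          simp only [List.mem_singleton] at hS''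
          subst hS''
          refine ih _ (List.mem_singleton_self _) f _ (hfin.insert _) ?_
          rw [Set.image_insert_eq]
          simp only [Fm.kmap]
          exact Set.insert_subset_insert hsub
      | @ins t X A x u hmem hX =>
          have h1 := hsub (Set.mem_image_of_mem _ hmem)
          simp only [Fm.kmap] at h1
          rw [Fm.kmap_subst1] at h1
          refine ClosedTableau.step (TabRule.ins x (f u) h1 (hX.image ⇑f)) ?_
          rintro S'' hS''
          simp only [List.mem_singleton] at hS''
          subst hS''
          refine ih _ (List.mem_singleton_self _) f _ (hfin.insert _) ?_
          rw [Set.image_insert_eq]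
          simp only [Fm.kmap]
          exact Set.insert_subset_insert hsub
      | @genx t X A x hmem hX =>
          have h1 := hsub (Set.mem_image_of_mem _ hmem)
          simp only [Fm.kmap] at h1
          refine ClosedTableau.step (TabRule.genx h1 (hX.image ⇑f)) ?_
          rintro S'' hS''
          simp only [List.mem_singleton] at hS''
          subst hS''
          refine ih _ (List.mem_singleton_self _) f _ (hfin.insert _) ?_
          rw [Set.image_insert_eq]
          simp only [Fm.kmap]
          exact Set.insert_subset_insert hsub

theorem closedTableau_mono {CS : Set (ℕ × Fm Empty)} {S S' : Set (Fm ℕ)}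
    (h : ClosedTableau CS S) (hsub : S ⊆ S') (hfin : S'.Finite) : ClosedTableau CS S' := by
  apply closedTableau_perm_mono h (Equiv.refl ℕ) S' hfin
  rintro _ ⟨F, hF, rfl⟩
  have : Fm.kmap ⇑(Equiv.refl ℕ) F = F := by
    rw [Equiv.coe_refl, Fm.kmap_id]
  rw [this]
  exact hsub hF

end AuxFapp3
/-- closure under (F·).  If `¬(s·t):_X B ∈ Γ` then for every
formula `A` with `Par(A) ⊆ X`, either `¬s:_X(A→B) ∈ Γ` or `¬t:_X A ∈ Γ`. -/
theorem mcs_closed_fapp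
    (CS : Set (ℕ × Fm Empty)) (hCS : ConstantSpec CS)
    (Γ : Set (Fm ℕ)) (hclosed : ∀ F ∈ Γ, F.Closed)
    (hmax : MaximalCons CS Γ) (hE : EComplete Γ)
    (s t : Tm) (X : Finset (ℕ ⊕ ℕ)) (B : Fm ℕ)
    (h : Fm.neg (Fm.just (Tm.app s t) X B) ∈ Γ) :
    ∀ A : Fm ℕ, (∀ u ∈ A.kocc, Sum.inr u ∈ X) →
      Fm.neg (Fm.just s X (A.imp B)) ∈ Γ ∨ Fm.neg (Fm.just t X A) ∈ Γ := by
  intro A hA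
  by_contra hcon
  push_neg at hcon
  obtain ⟨hs, ht⟩ := hcon
  have hcG := hclosed _ h
  have hXPar : XPar X := by
    rintro (x | u) hmem
    · exfalso
      have hx : x ∈ (X.toList.filterMap Sum.getLeft?).toFinset :=
        Fm.mem_left_toFinset.mpr hmem
      rw [Fm.Closed] at hcG
      simp only [Fm.fvar] at hcG
      rw [hcG] at hx
      simp at hx
    · exact ⟨u, rfl⟩
  have hF1closed : (Fm.neg (Fm.just s X (A.imp B))).Closed := by
    rw [Fm.Closed] at hcG ⊢
    simp only [Fm.fvar] at hcG ⊢
    exact hcG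
  have hF2closed : (Fm.neg (Fm.just t X A)).Closed := by
    rw [Fm.Closed] at hcG ⊢
    simp only [Fm.fvar] at hcG ⊢
    exact hcG
  have key : ∀ F : Fm ℕ, F.Closed → F ∉ Γ →
      ∃ S₀ : Set (Fm ℕ), S₀ ⊆ Γ ∧ S₀.Finite ∧ ClosedTableau CS (insert F S₀) := by
    intro F hFc hFn
    have hincon : ¬ TabConsistent CS (insert F Γ) := by
      intro hc
      apply hFn
      have heq := hmax.2 (insert F Γ) (Set.subset_insert _ _) ?_ hc
      · exact heq ▸ Set.mem_insert F Γ
      · rintro G hG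
        rcases Set.mem_insert_iff.mp hG with rfl | hG'
        · exact hFc
        · exact hclosed G hG'
    rw [TabConsistent] at hincon
    push_neg at hincon
    obtain ⟨S₁, hsub₁, hfin₁, htab₁⟩ := hincon
    refine ⟨S₁ \ {F}, ?_, hfin₁.diff, ?_⟩
    · rintro G ⟨hG, hGne⟩
      rcases Set.mem_insert_iff.mp (hsub₁ hG) with rfl | hq
      · exact absurd rfl hGne
      · exact hq
    · refine closedTableau_mono htab₁ ?_ ((hfin₁.diff).insert _)
      intro G hG
      by_cases hGF : G = F
      · exact hGF ▸ Set.mem_insert _ _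
      · exact Set.mem_insert_of_mem _ ⟨hG, by simpa using hGF⟩
  obtain ⟨S₁, hS₁Γ, hS₁fin, hT₁⟩ := key _ hF1closed hs
  obtain ⟨S₂, hS₂Γ, hS₂fin, hT₂⟩ := key _ hF2closed ht
  refine hmax.1 (insert (Fm.neg (Fm.just (Tm.app s t) X B)) (S₁ ∪ S₂)) ?_ ?_ ?_
  · exact Set.insert_subset h (Set.union_subset hS₁Γ hS₂Γ)
  · exact (hS₁fin.union hS₂fin).insert _
  · refine ClosedTableau.step (TabRule.fapp A (Set.mem_insert _ _) hXPar hA) ?_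
    rintro S'' hS''
    simp only [List.mem_cons, List.not_mem_nil, or_false] at hS''
    rcases hS'' with rfl | rfl
    · refine closedTableau_mono hT₁ ?_ (((hS₁fin.union hS₂fin).insert _).insert _)
      exact Set.insert_subset_insert
        (Set.subset_union_left.trans (Set.subset_insert _ _))
    · refine closedTableau_mono hT₂ ?_ (((hS₁fin.union hS₂fin).insert _).insert _)
      exact Set.insert_subset_insert
        (Set.subset_union_right.trans (Set.subset_insert _ _))
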